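/- Let λ and μ be real numbers with λ ≥ μ > 0, let p be a positive integer, let q ∈ (0,1), and let s > 0. Then λ·ln(1−q) + μ·ln[p]_q + λ·ψ_q(s) − μ·ψ_{(p,q)}(s) ≤ 0. -/

import Mathlib

open Real

/-- `[p]_q = (1 - q^p)/(1 - q)` -/
noncomputable def pnq (p : ℕ) (q : ℝ) : ℝ := (1 - q ^ p) / (1 - q)

/-- q-psi function via its series representation. -/
noncomputable def psiq (q s : ℝ) : ℝ :=
  -Real.log (1 - q) + Real.log q * ∑' n : ℕ, q ^ (((n : ℝ) + 1) * s) / (1 - q ^ (n + 1))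

/-- (p,q)-psi function via its series representation. -/
noncomputable def psipq (p : ℕ) (q s : ℝ) : ℝ :=
  Real.log (pnq p q) +
    Real.log q * ∑ n ∈ Finset.range p, q ^ (((n : ℝ) + 1) * s) / (1 - q ^ (n + 1))

/-- k-psi function via its series representation. -/
noncomputable def psik (k s : ℝ) : ℝ :=
  (Real.log k - Real.eulerMascheroniConstant) / k - 1 / s +
    ∑' n : ℕ, s / (((n : ℝ) + 1) * k * (((n : ℝ) + 1) * k + s))

/-- (q,k)-psi function via its series representation. -/
noncomputable def psiqk (q k s : ℝ) : ℝ :=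
  -Real.log (1 - q) / k +
    Real.log q * ∑' n : ℕ, q ^ (((n : ℝ) + 1) * k * s) / (1 - q ^ (((n : ℝ) + 1) * k))

/-- Normalized q-Gamma function. -/
noncomputable def Gammaq (q s : ℝ) : ℝ :=
  (1 - q) ^ (-s) *
    Real.exp (∑' n : ℕ, q ^ (((n : ℝ) + 1) * s) / (((n : ℝ) + 1) * (1 - q ^ (n + 1))))

/-- Normalized (p,q)-Gamma function. -/
noncomputable def Gammapq (p : ℕ) (q s : ℝ) : ℝ :=
  (pnq p q) ^ s *
    Real.exp (∑ n ∈ Finset.range p, q ^ (((n : ℝ) + 1) * s) / (((n : ℝ) + 1) * (1 - q ^ (n + 1))))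

/-- Normalized (q,k)-Gamma function. -/
noncomputable def Gammaqk (q k s : ℝ) : ℝ :=
  (1 - q) ^ (-s / k) *
    Real.exp (∑' n : ℕ,
      q ^ (((n : ℝ) + 1) * k * s) / (((n : ℝ) + 1) * k * (1 - q ^ (((n : ℝ) + 1) * k))))

/-- k-Gamma function. -/
noncomputable def Gammak (k s : ℝ) : ℝ :=
  ∫ x in Set.Ioi (0 : ℝ), Real.exp (-(x ^ k) / k) * x ^ (s - 1)

theorem stmt0 (lam mu : ℝ) (hmu : 0 < mu) (hlm : mu ≤ lam)
    (p : ℕ) (hp : 0 < p) (q : ℝ) (hq : q ∈ Set.Ioo (0 : ℝ) 1) (s : ℝ) (hs : 0 < s) :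
    lam * Real.log (1 - q) + mu * Real.log (pnq p q) + lam * psiq q s - mu * psipq p q s ≤ 0 := by
  obtain ⟨hq0, hq1⟩ := hq
  have hfnonneg : ∀ n : ℕ, 0 ≤ q ^ (((n : ℝ) + 1) * s) / (1 - q ^ (n + 1)) := by
    intro n
    apply div_nonneg (Real.rpow_nonneg hq0.le _)
    have : q ^ (n + 1) < 1 := pow_lt_one₀ hq0.le hq1 (Nat.succ_ne_zero n)
    linarith
  have hqs : q ^ s < 1 := Real.rpow_lt_one hq0.le hq1 hs
  have hqsnn : 0 ≤ q ^ s := Real.rpow_nonneg hq0.le s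
  have hnum : ∀ n : ℕ, q ^ (((n : ℝ) + 1) * s) = (q ^ s) ^ (n + 1) := by
    intro n
    rw [mul_comm, Real.rpow_mul hq0.le, ← Real.rpow_natCast (q ^ s) (n + 1)]
    push_cast
    ring_nf
  have hsum : Summable (fun n : ℕ => q ^ (((n : ℝ) + 1) * s) / (1 - q ^ (n + 1))) := by
    have hg : Summable (fun n : ℕ => (q ^ s) ^ (n + 1) / (1 - q)) := by
      have := (summable_geometric_of_lt_one hqsnn hqs).mul_left (q ^ s)
      have := this.div_const (1 - q)
      convert this using 2 with n
      case e'_5 => ring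
      rfl
    apply Summable.of_nonneg_of_le hfnonneg _ hg
    intro n
    rw [hnum n]
    have h1 : 1 - q ^ (n + 1) ≥ 1 - q := by
      have : q ^ (n + 1) ≤ q := by
        calc q ^ (n + 1) ≤ q ^ 1 := pow_le_pow_of_le_one hq0.le hq1.le (by omega)
        _ = q := pow_one q
      linarith
    apply div_le_div_of_nonneg_left (pow_nonneg hqsnn _) (by linarith) h1
  have hST : ∑ n ∈ Finset.range p, q ^ (((n : ℝ) + 1) * s) / (1 - q ^ (n + 1)) ≤
      ∑' n : ℕ, q ^ (((n : ℝ) + 1) * s) / (1 - q ^ (n + 1)) :=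
    Summable.sum_le_tsum _ (fun i _ => hfnonneg i) hsum
  have hS0 : 0 ≤ ∑ n ∈ Finset.range p, q ^ (((n : ℝ) + 1) * s) / (1 - q ^ (n + 1)) :=
    Finset.sum_nonneg fun i _ => hfnonneg i
  have hlog : Real.log q < 0 := Real.log_neg hq0 hq1
  have key : lam * Real.log (1 - q) + mu * Real.log (pnq p q) + lam * psiq q s -
      mu * psipq p q s = Real.log q *
        (lam * (∑' n : ℕ, q ^ (((n : ℝ) + 1) * s) / (1 - q ^ (n + 1))) -
         mu * (∑ n ∈ Finset.range p, q ^ (((n : ℝ) + 1) * s) / (1 - q ^ (n + 1)))) := by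
    simp only [psiq, psipq]
    ring
  rw [key]
  apply mul_nonpos_of_nonpos_of_nonneg hlog.le
  nlinarith
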